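/- Let ν > −1 and define I_ν(x) = Σ_{n≥0} (x²/4)ⁿ / ((ν+1)_n · n!), where (ν+1)_n = Γ(ν+n+1)/Γ(ν+1) is the Pochhammer symbol. Then for all real x ≠ 0, I_ν(x)·I_{ν+2}(x) < ((ν+2)/(ν+1))·I_{ν+1}(x)². -/

import Mathlib

open Finset

noncomputable def besselINorm (ν x : ℝ) : ℝ :=
  ∑' n : ℕ, (1/4 : ℝ)^n * x^(2*n) /
    ((Real.Gamma (ν + n + 1) / Real.Gamma (ν + 1)) * n.factorial)
namespace TuranAux
noncomputable def P (x : ℝ) (n : ℕ) : ℝ := ∏ i ∈ Finset.range n, (x + i)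

lemma P_zero (x : ℝ) : P x 0 = 1 := by simp [P]

lemma P_succ (x : ℝ) (n : ℕ) : P x (n+1) = P x n * (x + n) := by
  simp [P, Finset.prod_range_succ]

lemma P_succ' (x : ℝ) (n : ℕ) : P x (n+1) = x * P (x+1) n := by
  rw [P, Finset.prod_range_succ']
  simp only [Nat.cast_zero, add_zero, mul_comm]
  rw [P]
  congr 1
  exact Finset.prod_congr rfl fun i _ => by push_cast; ring

lemma P_pos {x : ℝ} (hx : 0 < x) (n : ℕ) : 0 < P x n :=
  Finset.prod_pos fun i _ => by positivity

lemma P_add (x : ℝ) (m n : ℕ) : P x (m+n) = P x m * P (x+m) n := by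
  rw [P, Finset.prod_range_add, P, P]
  congr 1
  exact Finset.prod_congr rfl fun i _ => by push_cast; ring

lemma P_reflect (x : ℝ) (n : ℕ) : P x n = (-1)^n * P (1 - x - n) n := by
  rw [P, ← Finset.prod_range_reflect, P,
    show ((-1:ℝ))^n = ∏ _i ∈ Finset.range n, (-1:ℝ) by simp, ← Finset.prod_mul_distrib]
  refine Finset.prod_congr rfl fun i hi => ?_
  have hi' := Finset.mem_range.mp hi
  have : (↑(n - 1 - i) : ℝ) = n - 1 - i := by
    push_cast [Nat.cast_sub (by omega : i ≤ n - 1), Nat.cast_sub (by omega : 1 ≤ n)]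
    ring
  rw [this]; ring

lemma vandermonde (n : ℕ) : ∀ x y : ℝ,
    ∑ k ∈ Finset.range (n+1), (n.choose k : ℝ) * P x k * P y (n-k) = P (x+y) n := by
  induction n with
  | zero => intro x y; simp [P_zero]
  | succ n ih =>
    intro x y
    have key : ∀ k ∈ Finset.range (n+1),
        (((n+1).choose (k+1) : ℝ)) * P x (k+1) * P y (n+1-(k+1))
        = ((n.choose k : ℝ) * P x k * P y (n-k)) * (x+k)
          + (n.choose (k+1) : ℝ) * P x (k+1) * P y (n+1-(k+1)) := by
      intro k hk
      have e1 : n+1-(k+1) = n-k := by omega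
      rw [Nat.choose_succ_succ, e1, P_succ x k]
      push_cast
      ring
    rw [Finset.sum_range_succ', Finset.sum_congr rfl key, Finset.sum_add_distrib]
    have glue : (∑ k ∈ Finset.range (n+1), (n.choose (k+1) : ℝ) * P x (k+1) * P y (n+1-(k+1)))
        + ((n+1).choose 0 : ℝ) * P x 0 * P y (n+1-0)
        = ∑ k ∈ Finset.range (n+1), (n.choose k : ℝ) * P x k * P y (n+1-k) := by
      have := Finset.sum_range_succ' (fun k => (n.choose k : ℝ) * P x k * P y (n+1-k)) (n+1)
      simp only [Nat.choose_zero_right, Nat.cast_one] at this ⊢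
      rw [← this, Finset.sum_range_succ]
      simp [Nat.choose_succ_self]
    rw [add_assoc, glue]
    have step2 : ∀ k ∈ Finset.range (n+1), (n.choose k : ℝ) * P x k * P y (n+1-k)
        = ((n.choose k : ℝ) * P x k * P y (n-k)) * (y + n - k) := by
      intro k hk
      have hk2 := Finset.mem_range.mp hk
      have hk' : k ≤ n := by omega
      have e : n+1-k = (n-k)+1 := by omega
      rw [e, P_succ, Nat.cast_sub hk']
      ring
    rw [Finset.sum_congr rfl step2, ← Finset.sum_add_distrib]
    have comb : ∀ k ∈ Finset.range (n+1),
        ((n.choose k : ℝ) * P x k * P y (n-k)) * (x+k)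
          + ((n.choose k : ℝ) * P x k * P y (n-k)) * (y + n - k)
        = (x+y+n) * ((n.choose k : ℝ) * P x k * P y (n-k)) := by
      intro k hk; ring
    rw [Finset.sum_congr rfl comb, ← Finset.mul_sum, ih, P_succ]
    ring

lemma flip (x y : ℝ) (n : ℕ) :
    ∑ ij ∈ Finset.HasAntidiagonal.antidiagonal n, (n.choose ij.1 : ℝ) * P (x + ij.1) ij.2 * P (y + ij.2) ij.1
      = P (x + y + n - 1) n := by
  rw [Finset.Nat.sum_antidiagonal_eq_sum_range_succ_mk]
  have term : ∀ k ∈ Finset.range (n+1),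
      (n.choose k : ℝ) * P (x + k) (n-k) * P (y + (n-k : ℕ)) k
      = ((-1:ℝ))^n * ((n.choose k : ℝ) * P (1-y-n) k * P (1-x-n) (n-k)) := by
    intro k hk
    have hk' : k ≤ n := Nat.lt_succ_iff.mp (Finset.mem_range.mp hk)
    rw [P_reflect (x + k) (n-k), P_reflect (y + (n-k : ℕ)) k, Nat.cast_sub hk']
    have e1 : (1 : ℝ) - (x + k) - ((n:ℝ) - k) = 1 - x - n := by ring
    have e2 : (1 : ℝ) - (y + ((n:ℝ) - k)) - k = 1 - y - n := by ring
    rw [e1, e2]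
    have hs : ((-1:ℝ))^n = ((-1:ℝ))^(n-k) * (-1:ℝ)^k := by
      rw [← pow_add]; congr 1; omega
    rw [hs]; ring
  rw [Finset.sum_congr rfl term, ← Finset.mul_sum, vandermonde, P_reflect (x+y+(n:ℝ)-1) n]
  congr 2
  ring

lemma recip_sum {a b : ℝ} (ha : 0 < a) (hb : 0 < b) (n : ℕ) :
    ∑ ij ∈ Finset.HasAntidiagonal.antidiagonal n,
      1 / ((ij.1.factorial : ℝ) * ij.2.factorial * P a ij.1 * P b ij.2)
      = P (a + b + n - 1) n / ((n.factorial : ℝ) * P a n * P b n) := by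
  have hne : ((n.factorial : ℝ) * P a n * P b n) ≠ 0 :=
    (mul_pos (mul_pos (Nat.cast_pos.mpr n.factorial_pos) (P_pos ha n)) (P_pos hb n)).ne'
  rw [eq_div_iff hne, Finset.sum_mul, ← flip a b n]
  refine Finset.sum_congr rfl fun ij hij => ?_
  obtain ⟨i, j⟩ := ij
  have hn : i + j = n := Finset.HasAntidiagonal.mem_antidiagonal.mp hij
  subst hn
  have hPa : P a (i+j) = P a i * P (a+i) j := P_add a i j
  have hPb : P b (i+j) = P b j * P (b+j) i := by rw [add_comm i j]; exact P_add b j i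
  have hfact : (((i+j).factorial : ℕ) : ℝ) = ((i+j).choose i : ℝ) * i.factorial * j.factorial := by
    rw [← Nat.choose_mul_factorial_mul_factorial (Nat.le_add_right i j), Nat.add_sub_cancel_left]
    push_cast
    ring
  simp only [hPa, hPb, hfact]
  have h1 : P a i ≠ 0 := (P_pos ha i).ne'
  have h2 : P b j ≠ 0 := (P_pos hb j).ne'
  have h3 : (i.factorial : ℝ) ≠ 0 := Nat.cast_ne_zero.mpr i.factorial_ne_zero
  have h4 : (j.factorial : ℝ) ≠ 0 := Nat.cast_ne_zero.mpr j.factorial_ne_zero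
  field_simp

lemma gamma_ratio (μ : ℝ) (hμ : -1 < μ) (n : ℕ) :
    Real.Gamma (μ + n + 1) / Real.Gamma (μ + 1) = P (μ+1) n := by
  have hμ1 : 0 < μ + 1 := by linarith
  induction n with
  | zero =>
    simp only [Nat.cast_zero, add_zero, P_zero]
    exact div_self (Real.Gamma_pos_of_pos hμ1).ne'
  | succ n ih =>
    have h1 : μ + ((n:ℕ)+1:ℕ) + 1 = (μ + n + 1) + 1 := by push_cast; ring
    have h2 : (0:ℝ) < μ + n + 1 := by
      have : (0:ℝ) ≤ n := Nat.cast_nonneg n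
      linarith
    rw [h1, Real.Gamma_add_one h2.ne', mul_div_assoc, ih, P_succ]
    ring

lemma f_summable (μ : ℝ) (hμ : -1 < μ) (x : ℝ) :
    Summable (fun n : ℕ => (1/4:ℝ)^n * (x^2)^n / (P (μ+1) n * n.factorial)) := by
  have hμ1 : 0 < μ + 1 := by linarith
  set c := min 1 (μ+1) with hcdef
  have hc0 : 0 < c := lt_min one_pos hμ1
  have hc1 : c ≤ 1 := min_le_left _ _
  have hc2 : c ≤ μ + 1 := min_le_right _ _
  have hP : ∀ n : ℕ, c^n * (n.factorial:ℝ) ≤ P (μ+1) n := by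
    intro n
    have e : c^n * (n.factorial:ℝ) = ∏ i ∈ Finset.range n, (c * ((i:ℝ)+1)) := by
      rw [Finset.prod_mul_distrib, Finset.prod_const, Finset.card_range]
      congr 1
      exact_mod_cast (Finset.prod_range_add_one_eq_factorial n).symm
    rw [e, P]
    refine Finset.prod_le_prod (fun i _ => by positivity) (fun i _ => ?_)
    have hi : (0:ℝ) ≤ i := Nat.cast_nonneg i
    nlinarith
  refine Summable.of_nonneg_of_le (fun n => ?_) (fun n => ?_)
    (Real.summable_pow_div_factorial (x^2/(4*c)))
  · exact div_nonneg (by positivity)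
      (mul_pos (P_pos hμ1 n) (Nat.cast_pos.mpr n.factorial_pos)).le
  · have hfn : (1/4:ℝ)^n * (x^2)^n = (x^2/(4*c))^n * c^n := by
      rw [← mul_pow, ← mul_pow]
      congr 1
      field_simp
    rw [hfn, mul_div_assoc]
    have hden : (0:ℝ) < P (μ+1) n * n.factorial :=
      mul_pos (P_pos hμ1 n) (Nat.cast_pos.mpr n.factorial_pos)
    have h1 : c^n / (P (μ+1) n * (n.factorial:ℝ)) ≤ 1 / (n.factorial:ℝ) := by
      rw [div_le_div_iff₀ hden (Nat.cast_pos.mpr n.factorial_pos)]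
      have h2 : (1:ℝ) ≤ (n.factorial:ℝ) := by exact_mod_cast n.factorial_pos
      nlinarith [hP n, pow_pos hc0 n]
    calc (x^2/(4*c))^n * (c^n / (P (μ+1) n * (n.factorial:ℝ)))
        ≤ (x^2/(4*c))^n * (1 / (n.factorial:ℝ)) :=
          mul_le_mul_of_nonneg_left h1 (by positivity)
      _ = (x^2/(4*c))^n / (n.factorial:ℝ) := by rw [mul_one_div]

lemma coeff_ineq (ν : ℝ) (hν : -1 < ν) (n : ℕ) :
    ∑ ij ∈ Finset.HasAntidiagonal.antidiagonal n,
      1 / ((ij.1.factorial:ℝ) * ij.2.factorial * P (ν+1) ij.1 * P (ν+3) ij.2)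
    ≤ (ν+2)/(ν+1) * ∑ ij ∈ Finset.HasAntidiagonal.antidiagonal n,
      1 / ((ij.1.factorial:ℝ) * ij.2.factorial * P (ν+2) ij.1 * P (ν+2) ij.2) := by
  have h1 : (0:ℝ) < ν + 1 := by linarith
  have h2 : (0:ℝ) < ν + 2 := by linarith
  have h3 : (0:ℝ) < ν + 3 := by linarith
  have hn0 : (0:ℝ) ≤ n := Nat.cast_nonneg n
  rw [recip_sum h1 h3 n, recip_sum h2 h2 n]
  have hQeq : (ν+1) + (ν+3) + (n:ℝ) - 1 = (ν+2) + (ν+2) + (n:ℝ) - 1 := by ring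
  rw [hQeq]
  have hQpos : 0 < P ((ν+2) + (ν+2) + (n:ℝ) - 1) n := P_pos (by linarith) n
  have hF : (0:ℝ) < n.factorial := Nat.cast_pos.mpr n.factorial_pos
  have hA : 0 < P (ν+1) n := P_pos h1 n
  have hB : 0 < P (ν+3) n := P_pos h3 n
  have hC : 0 < P (ν+2) n := P_pos h2 n
  have r1 : P (ν+1) n * ((ν+1) + (n:ℝ)) = (ν+1) * P (ν+2) n := by
    have a2 := P_succ' (ν+1) n
    rw [show (ν+1+1:ℝ) = ν+2 by ring] at a2
    rw [← P_succ, a2]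
  have r2 : (ν+2) * P (ν+3) n = P (ν+2) n * ((ν+2) + (n:ℝ)) := by
    have a2 := P_succ' (ν+2) n
    rw [show (ν+2+1:ℝ) = ν+3 by ring] at a2
    rw [← P_succ, a2]
  have key : (ν+2) * (P (ν+1) n * P (ν+3) n) * ((ν+1) + (n:ℝ))
      = (ν+1) * (P (ν+2) n * P (ν+2) n) * ((ν+2) + (n:ℝ)) := by
    linear_combination ((ν+2) * P (ν+3) n) * r1 + ((ν+1) * P (ν+2) n) * r2
  have main : (ν+1) * (P (ν+2) n * P (ν+2) n) ≤ (ν+2) * (P (ν+1) n * P (ν+3) n) := by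
    have hd : ((ν+2) * (P (ν+1) n * P (ν+3) n) - (ν+1) * (P (ν+2) n * P (ν+2) n))
        * ((ν+1) + (n:ℝ)) = (ν+1) * (P (ν+2) n * P (ν+2) n) := by
      linear_combination key
    nlinarith [mul_pos hC hC, mul_pos h1 (mul_pos hC hC)]
  rw [div_mul_div_comm, div_le_div_iff₀ (by positivity) (by positivity)]
  nlinarith [mul_le_mul_of_nonneg_left main (mul_pos hF hQpos).le]

end TuranAux

open TuranAux in
theorem turan_besselI (ν : ℝ) (hν : ν > -1) (x : ℝ) (hx : x ≠ 0) :
    besselINorm ν x * besselINorm (ν + 2) x <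
      ((ν + 2) / (ν + 1)) * besselINorm (ν + 1) x ^ 2 := by
  have h1 : (0:ℝ) < ν + 1 := by linarith
  have h2 : (0:ℝ) < ν + 2 := by linarith
  have hb : ∀ μ : ℝ, -1 < μ → besselINorm μ x
      = ∑' n : ℕ, (1/4:ℝ)^n * (x^2)^n / (P (μ+1) n * n.factorial) := by
    intro μ hμ
    exact tsum_congr fun n => by rw [gamma_ratio μ hμ n, pow_mul]
  have hnn : ∀ μ : ℝ, -1 < μ → ∀ n : ℕ,
      (0:ℝ) ≤ (1/4:ℝ)^n * (x^2)^n / (P (μ+1) n * n.factorial) := by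
    intro μ hμ n
    exact div_nonneg (by positivity)
      (mul_pos (P_pos (by linarith) n) (Nat.cast_pos.mpr n.factorial_pos)).le
  have hs : ∀ μ : ℝ, -1 < μ →
      Summable (fun n : ℕ => ‖(1/4:ℝ)^n * (x^2)^n / (P (μ+1) n * n.factorial)‖) := by
    intro μ hμ
    have := f_summable μ hμ x
    refine this.congr fun n => ?_
    rw [Real.norm_eq_abs, abs_of_nonneg (hnn μ hμ n)]
  have hprod : ∀ (a b : ℝ) (i j : ℕ),
      (1/4:ℝ)^i * (x^2)^i / (P a i * i.factorial)
        * ((1/4:ℝ)^j * (x^2)^j / (P b j * j.factorial))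
      = (x^2/4)^(i+j) * (1 / ((i.factorial:ℝ) * j.factorial * P a i * P b j)) := by
    intro a b i j
    have e : (x^2/4:ℝ)^(i+j) = (1/4)^i * (x^2)^i * ((1/4)^j * (x^2)^j) := by
      rw [show (x^2/4:ℝ) = 1/4 * x^2 by ring, pow_add, mul_pow, mul_pow]
    rw [div_mul_div_comm, ← e, mul_one_div]
    congr 1
    ring
  have cauchy : ∀ μ₁ μ₂ : ℝ, -1 < μ₁ → -1 < μ₂ →
      (∑' n : ℕ, (1/4:ℝ)^n * (x^2)^n / (P (μ₁+1) n * n.factorial))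
        * (∑' n : ℕ, (1/4:ℝ)^n * (x^2)^n / (P (μ₂+1) n * n.factorial))
      = ∑' n : ℕ, (x^2/4)^n * ∑ ij ∈ Finset.HasAntidiagonal.antidiagonal n,
          1 / ((ij.1.factorial:ℝ) * ij.2.factorial * P (μ₁+1) ij.1 * P (μ₂+1) ij.2) := by
    intro μ₁ μ₂ hμ₁ hμ₂
    rw [tsum_mul_tsum_eq_tsum_sum_antidiagonal_of_summable_norm (hs μ₁ hμ₁) (hs μ₂ hμ₂)]
    refine tsum_congr fun n => ?_
    rw [Finset.mul_sum]
    refine Finset.sum_congr rfl fun ij hij => ?_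
    have hn : ij.1 + ij.2 = n := Finset.HasAntidiagonal.mem_antidiagonal.mp hij
    rw [hprod, hn]
  rw [pow_two (besselINorm (ν+1) x), hb ν hν, hb (ν+2) (by linarith), hb (ν+1) (by linarith),
    cauchy ν (ν+2) hν (by linarith), cauchy (ν+1) (ν+1) (by linarith) (by linarith),
    ← tsum_mul_left]
  have hsum2 : Summable (fun n : ℕ => (ν+2)/(ν+1) * ((x^2/4)^n *
      ∑ ij ∈ Finset.HasAntidiagonal.antidiagonal n,
        1 / ((ij.1.factorial:ℝ) * ij.2.factorial * P (ν+1+1) ij.1 * P (ν+1+1) ij.2))) := by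
    refine Summable.mul_left _ ?_
    have := (summable_norm_sum_mul_antidiagonal_of_summable_norm
      (hs (ν+1) (by linarith)) (hs (ν+1) (by linarith))).of_norm
    refine this.congr fun n => ?_
    rw [Finset.mul_sum]
    refine Finset.sum_congr rfl fun ij hij => ?_
    have hn : ij.1 + ij.2 = n := Finset.HasAntidiagonal.mem_antidiagonal.mp hij
    rw [hprod, hn]
  refine Summable.tsum_lt_tsum_of_nonneg (i := 0) ?_ ?_ ?_ hsum2
  · intro n
    refine mul_nonneg (by positivity) (Finset.sum_nonneg fun ij _ => ?_)
    exact div_nonneg zero_le_one (mul_pos (mul_pos (mul_pos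
      (Nat.cast_pos.mpr ij.1.factorial_pos) (Nat.cast_pos.mpr ij.2.factorial_pos))
      (P_pos h1 ij.1)) (P_pos (show (0:ℝ) < ν+2+1 by linarith) ij.2)).le
  · intro n
    rw [show (ν+2+1:ℝ) = ν+3 by ring, show (ν+1+1:ℝ) = ν+2 by ring]
    have hc := coeff_ineq ν hν n
    calc (x^2/4)^n * ∑ ij ∈ Finset.HasAntidiagonal.antidiagonal n,
          1 / ((ij.1.factorial:ℝ) * ij.2.factorial * P (ν+1) ij.1 * P (ν+3) ij.2)
        ≤ (x^2/4)^n * ((ν+2)/(ν+1) * ∑ ij ∈ Finset.HasAntidiagonal.antidiagonal n,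
          1 / ((ij.1.factorial:ℝ) * ij.2.factorial * P (ν+2) ij.1 * P (ν+2) ij.2)) :=
          mul_le_mul_of_nonneg_left hc (by positivity)
      _ = (ν+2)/(ν+1) * ((x^2/4)^n * ∑ ij ∈ Finset.HasAntidiagonal.antidiagonal n,
          1 / ((ij.1.factorial:ℝ) * ij.2.factorial * P (ν+2) ij.1 * P (ν+2) ij.2)) := by ring
  · have e0 : ∀ (a b : ℝ), 0 < a → 0 < b → ((x^2/4:ℝ))^0 * ∑ ij ∈ Finset.HasAntidiagonal.antidiagonal 0,
        1 / ((ij.1.factorial:ℝ) * ij.2.factorial * P a ij.1 * P b ij.2) = 1 := by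
      intro a b ha hb
      simp [Finset.Nat.antidiagonal_zero, P_zero]
    rw [e0 (ν+1) (ν+2+1) h1 (by linarith), e0 (ν+1+1) (ν+1+1) (by linarith) (by linarith)]
    rw [mul_one]
    exact (one_lt_div h1).mpr (by linarith)
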